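/- arXiv:1807.04023 — 2 statements merged into one kernel-verified Lean document; each statement's English description precedes it below -/
import Mathlib

section
/- If q is a submodule element of an le-module M such that Rad(q) is a maximal ideal of R, then q is a primary element. -/
/-- An le-module over a commutative ring `R`: a commutative monoid and complete
lattice with top element `e = ⊤`, addition distributing over arbitrary joins,
with an `R`-action satisfying the le-module axioms. -/
class LeModule (R : Type*) (M : Type*) [CommRing R] extends
    AddCommMonoid M, CompleteLattice M, SMul R M where
  add_sSup : ∀ (m : M) (S : Set M), m + sSup S = ⨆ x ∈ S, m + x
  smul_add' : ∀ (r : R) (m₁ m₂ : M), r • (m₁ + m₂) = r • m₁ + r • m₂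
  add_smul_le : ∀ (r₁ r₂ : R) (m : M), (r₁ + r₂) • m ≤ r₁ • m + r₂ • m
  mul_smul' : ∀ (r₁ r₂ : R) (m : M), (r₁ * r₂) • m = r₁ • (r₂ • m)
  one_smul' : ∀ m : M, (1 : R) • m = m
  zero_smul' : ∀ m : M, (0 : R) • m = (0 : M)
  smul_zero' : ∀ r : R, r • (0 : M) = (0 : M)
  smul_sSup : ∀ (r : R) (S : Set M), r • sSup S = ⨆ x ∈ S, r • x

namespace LeModule

variable (R : Type*) {M : Type*} [CommRing R] [LeModule R M]

/-- `n` is a submodule element: `n + n ≤ n` and `r • n ≤ n` for all `r ∈ R`. -/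
def IsSub (n : M) : Prop := n + n ≤ n ∧ ∀ r : R, r • n ≤ n

variable {R}

/-- `A n = ⋁ { a₁•n + ⋯ + aₖ•n : aᵢ ∈ A }`. -/
def idealSMul (A : Ideal R) (n : M) : M :=
  sSup { m : M | ∃ l : List R, (∀ a ∈ l, a ∈ A) ∧ m = (l.map (fun a => a • n)).sum }

/-- `(n : A) = ⋁ { x ∈ M : A x ≤ n }`. -/
def colonIdeal (n : M) (A : Ideal R) : M := sSup { x : M | idealSMul A x ≤ n }

/-- `(n : r) = ⋁ { x ∈ M : r • x ≤ n }`. -/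
def colonElem (n : M) (r : R) : M := sSup { x : M | r • x ≤ n }

variable (R)

/-- `(k : m) = { r ∈ R : r • m ≤ k }` as a set of ring elements. -/
def colonSet (k m : M) : Set R := { r : R | r • m ≤ k }

/-- `Rad(n) = { a ∈ R : aᵐ • e ≤ n for some positive m }`. -/
def radSet (n : M) : Set R := { a : R | ∃ m : ℕ, 0 < m ∧ a ^ m • (⊤ : M) ≤ n }

/-- A primary element of an le-module. -/
def IsPrimaryElem (q : M) : Prop :=
  IsSub R q ∧ q ≠ ⊤ ∧
    ∀ (a : R) (x : M), a • x ≤ q → x ≤ q ∨ ∃ m : ℕ, 0 < m ∧ a ^ m • (⊤ : M) ≤ q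

/-- A prime submodule element of an le-module. -/
def IsPrimeElem (p : M) : Prop :=
  IsSub R p ∧ p ≠ ⊤ ∧
    ∀ (r : R) (n : M), r • n ≤ p → r • (⊤ : M) ≤ p ∨ n ≤ p

end LeModule

open LeModule

section Aux
variable {R : Type*} {M : Type*} [CommRing R] [LeModule R M]

lemma my_smul_mono (r : R) {x y : M} (h : x ≤ y) : r • x ≤ r • y := by
  have hs : r • sSup ({x, y} : Set M) = ⨆ z ∈ ({x, y} : Set M), r • z :=
    LeModule.smul_sSup r {x, y}
  rw [sSup_pair, sup_eq_right.mpr h] at hs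
  rw [hs]
  exact le_biSup _ (by simp : x ∈ ({x, y} : Set M))

lemma my_add_mono (m : M) {x y : M} (h : x ≤ y) : m + x ≤ m + y := by
  have hs : m + sSup ({x, y} : Set M) = ⨆ z ∈ ({x, y} : Set M), m + z :=
    LeModule.add_sSup m {x, y}
  rw [sSup_pair, sup_eq_right.mpr h] at hs
  rw [hs]
  exact le_biSup _ (by simp : x ∈ ({x, y} : Set M))

lemma my_pow_decomp (z a i : R) : ∀ m : ℕ, ∃ c : R, (z * a + i) ^ m = i ^ m + a * c := by
  intro m
  induction m with
  | zero => exact ⟨0, by ring⟩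
  | succ n ih =>
      obtain ⟨c, hc⟩ := ih
      exact ⟨z * i ^ n + z * a * c + i * c, by rw [pow_succ, hc]; ring⟩

end Aux

/-- if `Rad(q)` is a maximal ideal then `q` is primary. -/
theorem isPrimary_of_radSet_isMaximal {R M : Type*} [CommRing R] [LeModule R M]
    (q : M) (hq : IsSub R q) (P : Ideal R) (hP : (P : Set R) = radSet R q)
    (hmax : P.IsMaximal) :
    IsPrimaryElem R q := by
  have hmem : ∀ a : R, a ∈ P ↔ ∃ m : ℕ, 0 < m ∧ a ^ m • (⊤ : M) ≤ q := by
    intro a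
    constructor
    · intro h
      have : a ∈ (P : Set R) := h
      rw [hP] at this; exact this
    · intro h
      have : a ∈ radSet R q := h
      rw [← hP] at this; exact this
  have hqtop : q ≠ ⊤ := by
    intro h
    have h1 : (1 : R) ∈ P := by
      rw [hmem]
      exact ⟨1, one_pos, by rw [h]; exact le_top⟩
    exact hmax.ne_top (Ideal.eq_top_iff_one P |>.mpr h1)
  refine ⟨hq, hqtop, ?_⟩
  intro a x hax
  by_cases ha : a ∈ P
  · exact Or.inr ((hmem a).mp ha)
  · left
    obtain ⟨z, i, hiP, hzi⟩ := hmax.exists_inv ha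
    obtain ⟨m, hm, him⟩ := (hmem i).mp hiP
    obtain ⟨c, hc⟩ := my_pow_decomp z a i m
    have h1 : (1 : R) ^ m = i ^ m + a * c := by rw [← hzi]; exact hc
    rw [one_pow] at h1
    calc x = (1 : R) • x := (LeModule.one_smul' x).symm
      _ = (i ^ m + a * c) • x := by rw [h1]
      _ ≤ i ^ m • x + (a * c) • x := LeModule.add_smul_le _ _ _
      _ ≤ q + q := by
          have hB : (a * c) • x ≤ q := by
            calc (a * c) • x = (c * a) • x := by rw [mul_comm]
              _ = c • (a • x) := LeModule.mul_smul' _ _ _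
              _ ≤ c • q := my_smul_mono c hax
              _ ≤ q := hq.2 c
          have hA : i ^ m • x ≤ q :=
            le_trans (my_smul_mono _ le_top) him
          calc i ^ m • x + (a * c) • x ≤ i ^ m • x + q := my_add_mono _ hB
            _ = q + i ^ m • x := add_comm _ _
            _ ≤ q + q := my_add_mono _ hA
      _ ≤ q := hq.1
end

section
/- Let n be a proper submodule element of an le-module M with reduced primary decomposition n = q₁ ∧ ⋯ ∧ q_m, Pᵢ = Rad(qᵢ), and r ∈ R. Then (n:r) = n if and only if r is contained in no Pᵢ, where (n:r) = ⋁{ x ∈ M : rx ≤ n }. -/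
open LeModule

lemma LeModule.smul_mono' {R M : Type*} [CommRing R] [LeModule R M]
    (r : R) {a b : M} (h : a ≤ b) : r • a ≤ r • b := by
  have h1 : r • sSup ({a, b} : Set M) = ⨆ x ∈ ({a, b} : Set M), r • x :=
    LeModule.smul_sSup r _
  have h2 : sSup ({a, b} : Set M) = b := by rw [sSup_pair, sup_eq_right.mpr h]
  rw [h2] at h1
  rw [h1]
  exact le_biSup _ (Set.mem_insert a {b})

/-- for a reduced primary decomposition `n = q₁ ∧ ⋯ ∧ q_m`,
`(n : r) = n` iff `r` lies in no associated prime `Pᵢ`. -/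
theorem colonElem_eq_iff_not_mem_assoc_primes {R M : Type*} [CommRing R] [LeModule R M]
    (m : ℕ) (hm : 0 < m) (q : Fin m → M) (P : Fin m → Ideal R)
    (hq : ∀ i, IsPrimaryElem R (q i) ∧ radSet R (q i) = ((P i : Ideal R) : Set R))
    (n : M) (hn : n = ⨅ i, q i) (hproper : n ≠ ⊤)
    (hred1 : ∀ i : Fin m, ¬ (⨅ j : Fin m, ⨅ _ : j ≠ i, q j) ≤ q i)
    (hred2 : ∀ i j : Fin m, i ≠ j → P i ≠ P j)
    (r : R) :
    colonElem n r = n ↔ ∀ i, r ∉ P i := by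
  have smul_mono := fun (s : R) {a b : M} (h : a ≤ b) => LeModule.smul_mono' s h
  -- n is a submodule element for smul: r' • n ≤ n
  have hnsub : ∀ s : R, s • n ≤ n := by
    intro s
    rw [hn]
    refine le_iInf fun i => ?_
    exact le_trans (smul_mono s (iInf_le _ i)) ((hq i).1.1.2 s)
  have hnle : n ≤ colonElem n r := le_sSup (hnsub r)
  constructor
  · intro he i hri
    -- r ∈ P i = radSet (q i): r ^ k • ⊤ ≤ q i
    have hrad : r ∈ radSet R (q i) := by rw [(hq i).2]; exact hri
    obtain ⟨k, hk, hkle⟩ := hrad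
    set y : M := ⨅ j : Fin m, ⨅ _ : j ≠ i, q j with hy
    have hysub : ∀ s : R, s • y ≤ y := by
      intro s
      refine le_iInf fun j => le_iInf fun hj => ?_
      exact le_trans (smul_mono s (le_trans (iInf_le _ j) (iInf_le _ hj))) ((hq j).1.1.2 s)
    have hexists : ∃ t : ℕ, r ^ t • y ≤ q i := ⟨k, le_trans (smul_mono _ le_top) hkle⟩
    classical
    set t := Nat.find hexists with ht
    have htspec : r ^ t • y ≤ q i := Nat.find_spec hexists
    have ht0 : t ≠ 0 := by
      intro h0
      have : r ^ 0 • y ≤ q i := by rw [← h0]; exact htspec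
      rw [pow_zero, LeModule.one_smul'] at this
      exact hred1 i this
    set x : M := r ^ (t - 1) • y with hx
    have hxley : x ≤ y := by
      rcases Nat.eq_zero_or_pos (t - 1) with h | h
      · rw [hx, h, pow_zero, LeModule.one_smul']
      · exact hysub _
    have hrx : r • x ≤ n := by
      rw [hn]
      refine le_iInf fun j => ?_
      by_cases hji : j = i
      · subst hji
        have : r • x = r ^ t • y := by
          rw [hx, ← LeModule.mul_smul', ← pow_succ', Nat.sub_add_cancel (Nat.one_le_iff_ne_zero.mpr ht0)]
        rw [this]; exact htspec
      · exact le_trans (smul_mono r (le_trans hxley (le_trans (iInf_le _ j) (iInf_le _ hji)))) ((hq j).1.1.2 r)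
    have hxn : x ≤ n := he ▸ le_sSup hrx
    have : r ^ (t - 1) • y ≤ q i := le_trans hxn (hn ▸ iInf_le _ i)
    exact Nat.find_min hexists (Nat.sub_lt (Nat.pos_of_ne_zero ht0) one_pos) this
  · intro hr
    refine le_antisymm (sSup_le fun x hx => ?_) hnle
    rw [hn]
    refine le_iInf fun i => ?_
    have hxqi : r • x ≤ q i := le_trans hx (hn ▸ iInf_le _ i)
    rcases (hq i).1.2.2 r x hxqi with h | h
    · exact h
    · exfalso
      apply hr i
      have : r ∈ radSet R (q i) := h
      rwa [(hq i).2] at this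
end
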